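/- arXiv:1709.01984 — 6 statements merged into one kernel-verified Lean document; each statement's English description precedes it below -/
import Mathlib

section
/- Let A* ∈ ℂ^{M×N} be an isometry, b ∈ ℝ^M with b ≥ 0, and suppose x* ∈ ℂ^N satisfies x* = A (b ⊙ u ⊙ sgn(A* x*)) for some unimodular u ∈ ℂ^M, and moreover ‖x*‖ = ‖b‖. Then |A* x*| = b componentwise. -/
open Matrix Complex BigOperators

/-- Componentwise sign: `sgn z = z/|z|` for `z ≠ 0`, `sgn 0 = 1`. -/
noncomputable def csgn (z : ℂ) : ℂ := if z = 0 then 1 else z / (‖z‖ : ℂ)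

lemma abs_csgn (z : ℂ) : ‖csgn z‖ = 1 := by
  unfold csgn
  split_ifs with h
  · simp
  · simp [norm_div, h]

lemma adj_dot {m n : ℕ} (B : Matrix (Fin m) (Fin n) ℂ) (y : Fin m → ℂ) (z : Fin n → ℂ) :
    star (Bᴴ.mulVec y) ⬝ᵥ z = star y ⬝ᵥ B.mulVec z := by
  rw [star_mulVec, conjTranspose_conjTranspose, dotProduct_mulVec]

lemma dot_self_eq {m : ℕ} (v : Fin m → ℂ) :
    star v ⬝ᵥ v = ((∑ j, ‖v j‖ ^ 2 : ℝ) : ℂ) := by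
  simp only [dotProduct, Pi.star_apply, Complex.star_def]
  rw [Complex.ofReal_sum]
  refine Finset.sum_congr rfl fun j _ => ?_
  rw [Complex.sq_norm, Complex.normSq_eq_conj_mul_self]

/-- An AP fixed point `x* = A (b ⊙ u ⊙ sgn(A* x*))` with `‖x*‖ = ‖b‖` satisfies
`|A* x*| = b` componentwise. -/
theorem ap_fixed_point_norm_eq (M N : ℕ) (Astar : Matrix (Fin M) (Fin N) ℂ)
    (hA : Astarᴴ * Astar = 1) (b : Fin M → ℝ) (hb : ∀ j, 0 ≤ b j)
    (u : Fin M → ℂ) (hu : ∀ j, ‖u j‖ = 1)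
    (xstar : Fin N → ℂ)
    (hfix : xstar = Astarᴴ.mulVec
      (fun j => (b j : ℂ) * u j * csgn (Astar.mulVec xstar j)))
    (hnorm : Real.sqrt (∑ i, ‖xstar i‖ ^ 2)
      = Real.sqrt (∑ j, (b j) ^ 2)) :
    ∀ j, ‖Astar.mulVec xstar j‖ = b j := by
  set y : Fin M → ℂ := fun j => (b j : ℂ) * u j * csgn (Astar.mulVec xstar j) with hy
  have habsy : ∀ j, ‖y j‖ = b j := by
    intro j
    rw [hy]
    simp only []
    rw [norm_mul, norm_mul, hu j, abs_csgn, Complex.norm_of_nonneg (hb j), mul_one, mul_one]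
  -- norms
  have hsum : (∑ i, ‖xstar i‖ ^ 2) = ∑ j, (b j) ^ 2 := by
    have h1 : (0:ℝ) ≤ ∑ i, ‖xstar i‖ ^ 2 :=
      Finset.sum_nonneg fun i _ => sq_nonneg _
    have h2 : (0:ℝ) ≤ ∑ j, (b j) ^ 2 := Finset.sum_nonneg fun j _ => sq_nonneg _
    exact (Real.sqrt_inj h1 h2).mp hnorm
  have hyx : star y ⬝ᵥ y = star xstar ⬝ᵥ xstar := by
    rw [dot_self_eq, dot_self_eq]
    congr 1
    rw [hsum]
    congr 1
    ext j
    rw [habsy j]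
  have hxy : Astarᴴ.mulVec y = xstar := hfix.symm
  have adj2 : ∀ z, star (Astar.mulVec xstar) ⬝ᵥ z = star xstar ⬝ᵥ Astarᴴ.mulVec z := by
    intro z
    have := adj_dot Astarᴴ xstar z
    rwa [conjTranspose_conjTranspose] at this
  have h1 : star (Astar.mulVec xstar) ⬝ᵥ (Astar.mulVec xstar) = star xstar ⬝ᵥ xstar := by
    rw [adj2, mulVec_mulVec, hA, one_mulVec]
  have h2 : star (Astar.mulVec xstar) ⬝ᵥ y = star xstar ⬝ᵥ xstar := by
    rw [adj2, hxy]
  have h3 : star y ⬝ᵥ (Astar.mulVec xstar) = star xstar ⬝ᵥ xstar := by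
    rw [← adj_dot Astar y xstar, hxy]
  have hzero : star (y - Astar.mulVec xstar) ⬝ᵥ (y - Astar.mulVec xstar) = 0 := by
    rw [star_sub, sub_dotProduct, dotProduct_sub, dotProduct_sub, h1, h2, h3, hyx]
    ring
  have hyp : y = Astar.mulVec xstar := by
    rw [dot_self_eq] at hzero
    have : (∑ j, ‖(y - Astar.mulVec xstar) j‖ ^ 2 : ℝ) = 0 := by
      exact_mod_cast hzero
    have hall := (Finset.sum_eq_zero_iff_of_nonneg (fun j _ => sq_nonneg _)).mp this
    funext j
    have := hall j (Finset.mem_univ j)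
    have : ‖(y - Astar.mulVec xstar) j‖ = 0 := by
      nlinarith [norm_nonneg ((y - Astar.mulVec xstar) j)]
    have := norm_eq_zero.mp this
    simpa [sub_eq_zero, Pi.sub_apply] using this
  intro j
  have hj : Astar.mulVec xstar j = y j := by rw [← hyp]
  rw [hj, habsy j]
end

section
/- Let A* ∈ ℂ^{M×N} be an isometry, f ∈ ℂ^N, b = |A* f|. Suppose y* ∈ ℂ^M and u ∈ ℂ^M with |u[j]| = 1 for all j and u[j] = 1 whenever y*[j] ≠ 0, and suppose the DR fixed point equation A* A (2 b ⊙ sgn(y*) ⊙ u − y*) = b ⊙ sgn(y*) ⊙ u holds. Define x̂ = A(2 b ⊙ sgn(y*) ⊙ u − y*) and x* = A y*. If additionally x̂ = e^{iθ} f for some θ ∈ ℝ and e^{iθ} sgn(A* f)[j] = (sgn(y*) ⊙ u)[j] for every j with b[j] ≠ 0, then x* = e^{iθ} f. -/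
open Matrix Complex BigOperators

/-- Object-domain part of Proposition 4: if `y*` is a DR fixed point,
`x̂ = A(2 b ⊙ sgn(y*) ⊙ u − y*) = e^{iθ} f` and the Fourier phases agree on the
support of `b`, then `x* = A y* = e^{iθ} f`. -/
theorem dr_fixed_point_object (M N : ℕ) (Astar : Matrix (Fin M) (Fin N) ℂ)
    (hA : Astarᴴ * Astar = 1) (f : Fin N → ℂ)
    (b : Fin M → ℝ) (hbdef : ∀ j, b j = ‖Astar.mulVec f j‖)
    (ystar u : Fin M → ℂ)
    (hu1 : ∀ j, ‖u j‖ = 1)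
    (hu2 : ∀ j, ystar j ≠ 0 → u j = 1)
    (hfix : Astar.mulVec (Astarᴴ.mulVec
        (fun j => 2 * (b j : ℂ) * csgn (ystar j) * u j - ystar j))
      = fun j => (b j : ℂ) * csgn (ystar j) * u j)
    (xhat xstar : Fin N → ℂ)
    (hxhat : xhat = Astarᴴ.mulVec
      (fun j => 2 * (b j : ℂ) * csgn (ystar j) * u j - ystar j))
    (hxstar : xstar = Astarᴴ.mulVec ystar)
    (θ : ℝ)
    (hxf : xhat = fun i => Complex.exp (Complex.I * θ) * f i)
    (hphase : ∀ j, b j ≠ 0 →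
      Complex.exp (Complex.I * θ) * csgn (Astar.mulVec f j)
        = csgn (ystar j) * u j) :
    xstar = fun i => Complex.exp (Complex.I * θ) * f i := by
  set c := Complex.exp (Complex.I * θ) with hc
  set g : Fin M → ℂ := fun j => 2 * (b j : ℂ) * csgn (ystar j) * u j - ystar j with hg
  have key : ∀ j, (b j : ℂ) * csgn (ystar j) * u j = c * Astar.mulVec f j := by
    intro j
    by_cases hb : b j = 0
    · have hz : Astar.mulVec f j = 0 := by
        have := hbdef j
        rw [hb] at this
        exact norm_eq_zero.mp this.symm
      simp [hb, hz]
    · have hz : Astar.mulVec f j ≠ 0 := by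
        intro h
        apply hb
        rw [hbdef j, h]; simp
      have h1 := hphase j hb
      calc (b j : ℂ) * csgn (ystar j) * u j
          = (b j : ℂ) * (c * csgn (Astar.mulVec f j)) := by rw [mul_assoc, ← h1]
        _ = c * ((b j : ℂ) * csgn (Astar.mulVec f j)) := by ring
        _ = c * Astar.mulVec f j := by
            rw [hbdef j]
            unfold csgn
            rw [if_neg hz]
            have habs : ((‖Astar.mulVec f j‖ : ℝ) : ℂ) ≠ 0 := by
              simpa using hz
            field_simp
  have hy : ystar = (2 * c) • Astar.mulVec f - g := by
    funext j
    have := key j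
    simp only [Pi.sub_apply, Pi.smul_apply, smul_eq_mul, hg]
    linear_combination 2 * this
  have hgx : Astarᴴ.mulVec g = fun i => c * f i := by
    rw [← hxhat] at *
    exact hxf
  rw [hxstar, hy, Matrix.mulVec_sub, Matrix.mulVec_smul, Matrix.mulVec_mulVec, hA,
    Matrix.one_mulVec, hgx]
  funext i
  simp only [Pi.sub_apply, Pi.smul_apply, smul_eq_mul]
  ring
end

section
/- Let A* ∈ ℂ^{M×N} be an isometry and B* = diag(conj(ω)) A* for some unimodular ω ∈ ℂ^M. Let λ_1 ≥ λ_2 ≥ … ≥ λ_{2N} ≥ 0 be the singular values of the real 2N × M matrix 𝓑 = [Re(B); Im(B)] (stacking real and imaginary parts), where B = (B*)^*. Then λ_k² + λ_{2N+1−k}² = 1 for every k = 1, …, 2N. -/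
open Matrix Complex BigOperators

open Polynomial in
/-- The characteristic polynomial is invariant under conjugation by an invertible matrix. -/
lemma my_charpoly_conj {n : Type*} [Fintype n] [DecidableEq n] (W V A : Matrix n n ℝ)
    (h1 : W * V = 1) : (W * A * V).charpoly = A.charpoly := by
  have hm : ∀ X Y : Matrix n n ℝ, ((X * Y).map (C : ℝ →+* ℝ[X])) = X.map C * Y.map C :=
    fun X Y => Matrix.map_mul
  have hkey : charmatrix (W * A * V) = W.map (C : ℝ →+* ℝ[X]) * charmatrix A * V.map C := by
    unfold charmatrix
    have hs : Matrix.scalar n (X : ℝ[X]) = (X : ℝ[X]) • (1 : Matrix n n ℝ[X]) := by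
      simp [Matrix.scalar, Matrix.smul_one_eq_diagonal]
    rw [Matrix.mul_sub, Matrix.sub_mul, hs]
    congr 1
    · rw [Matrix.mul_smul, Matrix.smul_mul, mul_one, ← hm, h1,
        Matrix.map_one C (map_zero C) (map_one C)]
    · show _ = W.map (C : ℝ →+* ℝ[X]) * ((C : ℝ →+* ℝ[X]).mapMatrix A) * V.map C
      simp only [RingHom.mapMatrix_apply]
      rw [← hm, ← hm]
  rw [Matrix.charpoly, Matrix.charpoly, hkey, det_mul, det_mul]
  have hdet : (W.map (C : ℝ →+* ℝ[X])).det * (V.map (C : ℝ →+* ℝ[X])).det = 1 := by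
    rw [← det_mul, ← hm, h1, Matrix.map_one C (map_zero C) (map_one C), det_one]
  rw [mul_comm, ← mul_assoc, mul_comm ((V.map (C : ℝ →+* ℝ[X])).det), hdet, one_mul]

open Polynomial in
/-- The characteristic polynomial of a diagonal matrix. -/
lemma my_charpoly_diagonal {n : Type*} [Fintype n] [DecidableEq n] (d : n → ℝ) :
    (Matrix.diagonal d).charpoly = ∏ i, (X - C (d i)) := by
  rw [Matrix.charpoly, ← Matrix.det_diagonal]
  congr 1
  ext i j
  by_cases h : i = j
  · subst h; simp [charmatrix_apply]
  · simp [charmatrix_apply, Matrix.diagonal_apply_ne _ h, h]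

open Polynomial in
/-- If `S + J S Jᵀ = 1` with `J` orthogonal, then the multiset of eigenvalues of the
hermitian matrix `S` is invariant under `μ ↦ 1 - μ`. -/
lemma my_eigen_multiset {n : Type*} [Fintype n] [DecidableEq n] (S : Matrix n n ℝ)
    (hS : S.IsHermitian) (J : Matrix n n ℝ) (hJ1 : J * Jᵀ = 1)
    (hkey : S + J * S * Jᵀ = 1) :
    Multiset.map (fun i => 1 - hS.eigenvalues i) Finset.univ.val
      = Multiset.map hS.eigenvalues Finset.univ.val := by
  set μ := hS.eigenvalues with hμ
  have hV1 : (hS.eigenvectorUnitary : Matrix n n ℝ)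
      * (star hS.eigenvectorUnitary : Matrix n n ℝ) = 1 := by
    exact_mod_cast hS.eigenvectorUnitary.2.2
  have hD : Matrix.diagonal ((RCLike.ofReal : ℝ → ℝ) ∘ μ) = Matrix.diagonal μ := by
    congr 1
  have hspec : S = (hS.eigenvectorUnitary : Matrix n n ℝ) * Matrix.diagonal μ
      * (star hS.eigenvectorUnitary : Matrix n n ℝ) := by
    conv_lhs => rw [hS.spectral_theorem]
    rw [hD, Unitary.conjStarAlgAut_apply]
  have hc1 : S.charpoly = (Matrix.diagonal μ).charpoly := by
    rw [hspec]; exact my_charpoly_conj _ _ _ hV1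
  have h1S : (1 : Matrix n n ℝ) - S = J * S * Jᵀ := by
    rw [← hkey, add_sub_cancel_left]
  have hone : (1 : Matrix n n ℝ) - S = (hS.eigenvectorUnitary : Matrix n n ℝ)
      * Matrix.diagonal (fun i => 1 - μ i) * (star hS.eigenvectorUnitary : Matrix n n ℝ) := by
    have : Matrix.diagonal (fun i => 1 - μ i) = 1 - Matrix.diagonal μ := by
      rw [← Matrix.diagonal_one, Matrix.diagonal_sub]
    rw [this, Matrix.mul_sub, Matrix.sub_mul, Matrix.mul_one, hV1, ← hspec]
  have hc2 : ((1 : Matrix n n ℝ) - S).charpoly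
      = (Matrix.diagonal (fun i => 1 - μ i)).charpoly := by
    rw [hone]; exact my_charpoly_conj _ _ _ hV1
  have hc3 : ((1 : Matrix n n ℝ) - S).charpoly = S.charpoly := by
    rw [h1S]; exact my_charpoly_conj _ _ _ hJ1
  have hprod : ∏ i, (X - C (1 - μ i)) = ∏ i, (X - C (μ i)) := by
    rw [← my_charpoly_diagonal, ← my_charpoly_diagonal, ← hc1, ← hc2, hc3]
  have := congrArg Polynomial.roots hprod
  have e1 : (fun i => X - C (1 - μ i)) = (fun a : ℝ => X - C a) ∘ (fun i => 1 - μ i) := rfl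
  have e2 : (fun i => X - C (μ i)) = (fun a : ℝ => X - C a) ∘ μ := rfl
  rwa [Finset.prod_eq_multiset_prod, Finset.prod_eq_multiset_prod, e1, e2, ← Multiset.map_map,
    ← Multiset.map_map, Polynomial.roots_multiset_prod_X_sub_C,
    Polynomial.roots_multiset_prod_X_sub_C] at this

/-- An antitone enumeration of a multiset invariant under `μ ↦ 1 - μ` pairs up to `1`. -/
lemma my_antitone_pairing (N : ℕ) (μ : (Fin N ⊕ Fin N) → ℝ)
    (hms : Multiset.map (fun i => 1 - μ i) Finset.univ.val = Multiset.map μ Finset.univ.val)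
    (a : Fin (2 * N) → ℝ) (ha : Antitone a) (e : Fin (2 * N) ≃ (Fin N ⊕ Fin N))
    (hae : ∀ k, a k = μ (e k)) : ∀ k, a k + a k.rev = 1 := by
  set b : Fin (2 * N) → ℝ := fun k => 1 - a k.rev with hbdef
  have hmap_equiv : ∀ {α : Type} (f : (Fin N ⊕ Fin N) → α),
      Multiset.map (fun k => f (e k)) Finset.univ.val = Multiset.map f Finset.univ.val := by
    intro α f
    have h := congrArg Finset.val (Finset.map_univ_equiv e)
    calc Multiset.map (fun k => f (e k)) Finset.univ.val
        = Multiset.map f (Multiset.map e Finset.univ.val) := by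
          rw [Multiset.map_map]; rfl
      _ = Multiset.map f Finset.univ.val := by
          rw [show Multiset.map (⇑e) Finset.univ.val = Finset.univ.val from h]
  have hrev : Multiset.map Fin.rev (Finset.univ.val : Multiset (Fin (2 * N)))
      = Finset.univ.val := by
    have h := congrArg Finset.val (Finset.map_univ_equiv (Fin.revPerm : Equiv.Perm (Fin (2 * N))))
    exact h
  have hma : Multiset.map a Finset.univ.val = Multiset.map μ Finset.univ.val := by
    rw [funext hae]; exact hmap_equiv μ
  have hmb : Multiset.map b Finset.univ.val = Multiset.map a Finset.univ.val := by
    calc Multiset.map b Finset.univ.val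
        = Multiset.map (fun k => 1 - a k) (Multiset.map Fin.rev Finset.univ.val) := by
          rw [Multiset.map_map]; rfl
      _ = Multiset.map (fun k => 1 - a k) Finset.univ.val := by rw [hrev]
      _ = Multiset.map (fun i => 1 - μ i) Finset.univ.val := by
          rw [funext hae]; exact hmap_equiv (fun i => 1 - μ i)
      _ = Multiset.map μ Finset.univ.val := hms
      _ = Multiset.map a Finset.univ.val := hma.symm
  have hcoe : ∀ f : Fin (2 * N) → ℝ,
      (↑(List.ofFn f) : Multiset ℝ) = Multiset.map f Finset.univ.val := by
    intro f
    rw [List.ofFn_eq_map, Fin.univ_def]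
    rfl
  have hperm : List.Perm (List.ofFn b) (List.ofFn a) := by
    rw [← Multiset.coe_eq_coe, hcoe, hcoe]
    exact hmb
  have hsorted_a : (List.ofFn a).Pairwise (· ≥ ·) := by
    rw [List.pairwise_ofFn]
    intro i j hij
    exact ha hij.le
  have hsorted_b : (List.ofFn b).Pairwise (· ≥ ·) := by
    rw [List.pairwise_ofFn]
    intro i j hij
    simp only [hbdef]
    have : j.rev ≤ i.rev := Fin.rev_le_rev.2 hij.le
    have := ha this
    linarith
  have : List.ofFn b = List.ofFn a :=
    hperm.eq_of_pairwise' hsorted_b hsorted_a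
  have hba : b = a := List.ofFn_injective this
  intro k
  have : b k = a k := congrFun hba k
  simp only [hbdef] at this
  linarith

/-- Singular-value pairing for the realification `𝓑 = [Re B; Im B]` of a complex
isometry `B* = diag(conj ω) A*`: the decreasingly ordered singular values `λ_k` of
`𝓑` satisfy `λ_k² + λ_{2N+1−k}² = 1`. Here `a` is a decreasing enumeration of the
eigenvalues of `𝓑 𝓑ᵀ` and `λ_k = √(a k)`. -/
theorem singular_value_pairing (M N : ℕ) (Astar : Matrix (Fin M) (Fin N) ℂ)
    (hA : Astarᴴ * Astar = 1) (ω : Fin M → ℂ) (hω : ∀ j, ‖ω j‖ = 1)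
    (B : Matrix (Fin N) (Fin M) ℂ)
    (hB : B = Astarᴴ * Matrix.diagonal ω)
    (Bcal : Matrix (Fin N ⊕ Fin N) (Fin M) ℝ)
    (hBcal : Bcal = Matrix.of
      (Sum.elim (fun i j => (B i j).re) (fun i j => (B i j).im)))
    (hS : (Bcal * Bcalᵀ).IsHermitian)
    (a : Fin (2 * N) → ℝ) (ha : Antitone a)
    (hperm : ∃ e : Fin (2 * N) ≃ (Fin N ⊕ Fin N), ∀ k, a k = hS.eigenvalues (e k))
    (lam : Fin (2 * N) → ℝ) (hlam : ∀ k, lam k = Real.sqrt (a k)) :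
    ∀ k : Fin (2 * N), lam k ^ 2 + lam k.rev ^ 2 = 1 := by
  obtain ⟨e, hae⟩ := hperm
  -- Step 1: B * Bᴴ = 1
  have hBBH : B * Bᴴ = 1 := by
    subst hB
    rw [conjTranspose_mul, conjTranspose_conjTranspose, diagonal_conjTranspose,
      Matrix.mul_assoc Astarᴴ, ← Matrix.mul_assoc (Matrix.diagonal ω)
        (Matrix.diagonal (star ω)) Astar, diagonal_mul_diagonal]
    have h1 : Matrix.diagonal (fun i => ω i * star ω i) = 1 := by
      have : ∀ j, ω j * star ω j = 1 := by
        intro j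
        rw [Pi.star_apply, Complex.star_def, Complex.mul_conj,
          Complex.normSq_eq_norm_sq, hω]
        norm_num
      rw [funext this]; exact Matrix.diagonal_one
    rw [h1, Matrix.one_mul, hA]
  -- Step 2: real/imaginary block identities
  set R : Matrix (Fin N) (Fin M) ℝ := Matrix.of fun i j => (B i j).re with hR
  set I : Matrix (Fin N) (Fin M) ℝ := Matrix.of fun i j => (B i j).im with hI
  have key : ∀ i i', ∑ j, B i j * starRingEnd ℂ (B i' j) = if i = i' then 1 else 0 := by
    intro i i'
    have h := congrFun (congrFun hBBH i) i'
    simpa [Matrix.mul_apply, Matrix.conjTranspose_apply, Matrix.one_apply] using h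
  have h1 : R * Rᵀ + I * Iᵀ = 1 := by
    ext i i'
    have h := congrArg Complex.re (key i i')
    simp only [Complex.re_sum, Complex.mul_re, Complex.conj_re, Complex.conj_im,
      apply_ite Complex.re, Complex.one_re, Complex.zero_re] at h
    simp only [Matrix.add_apply, Matrix.mul_apply, Matrix.transpose_apply, Matrix.one_apply,
      hR, hI, Matrix.of_apply, ← Finset.sum_add_distrib]
    rw [← h]
    congr 1; funext j; ring
  have h2 : R * Iᵀ = I * Rᵀ := by
    ext i i'
    have h := congrArg Complex.im (key i i')
    simp only [Complex.im_sum, Complex.mul_im, Complex.conj_re, Complex.conj_im,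
      apply_ite Complex.im, Complex.one_im, Complex.zero_im, ite_self] at h
    simp only [Matrix.mul_apply, Matrix.transpose_apply, hR, hI, Matrix.of_apply]
    have h2' : ∑ j, ((B i j).im * (B i' j).re - (B i j).re * (B i' j).im) = 0 := by
      rw [← h]
      congr 1; funext j; ring
    rw [Finset.sum_sub_distrib] at h2'
    linarith [h2']
  -- Step 3: key identity S + J S Jᵀ = 1
  have hBcal' : Bcal = fromRows R I := by
    rw [hBcal]; rfl
  set J : Matrix (Fin N ⊕ Fin N) (Fin N ⊕ Fin N) ℝ :=
    fromBlocks 0 (-1) 1 0 with hJ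
  have hJT : Jᵀ = fromBlocks 0 1 (-1) 0 := by
    rw [hJ, Matrix.fromBlocks_transpose]
    simp
  have hJ1 : J * Jᵀ = 1 := by
    rw [hJT, hJ, Matrix.fromBlocks_multiply]
    simp [← Matrix.fromBlocks_one]
  have hkey : Bcal * Bcalᵀ + J * (Bcal * Bcalᵀ) * Jᵀ = 1 := by
    have hSb : Bcal * Bcalᵀ = fromBlocks (R * Rᵀ) (R * Iᵀ) (I * Rᵀ) (I * Iᵀ) := by
      rw [hBcal', Matrix.transpose_fromRows, Matrix.fromRows_mul_fromCols]
    rw [hSb, hJT, hJ, Matrix.fromBlocks_multiply, Matrix.fromBlocks_multiply,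
      Matrix.fromBlocks_add, ← Matrix.fromBlocks_one]
    congr 1 <;> simp [h2, add_comm, h1]
  -- Step 4: multiset of eigenvalues is invariant under μ ↦ 1 - μ
  have hms := my_eigen_multiset (Bcal * Bcalᵀ) hS J hJ1 hkey
  -- Step 5: the antitone enumeration pairs up
  have hpair : ∀ k, a k + a k.rev = 1 :=
    my_antitone_pairing N hS.eigenvalues hms a ha e hae
  -- Step 6: eigenvalues are nonnegative
  have hpsd : (Bcal * Bcalᵀ).PosSemidef := by
    rw [← Matrix.conjTranspose_eq_transpose_of_trivial]
    exact Matrix.posSemidef_self_mul_conjTranspose Bcal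
  have hnonneg : ∀ k, 0 ≤ a k := by
    intro k
    rw [hae k]
    exact hpsd.eigenvalues_nonneg (e k)
  intro k
  rw [hlam k, hlam k.rev, Real.sq_sqrt (hnonneg k), Real.sq_sqrt (hnonneg k.rev)]
  exact hpair k
end

section
/- Let A* ∈ ℂ^{M×N} be an isometry, f ∈ ℂ^N, B = A diag(sgn(A* f)), and 𝓑 = [Re(B); Im(B)] ∈ ℝ^{2N×M}. Let G(x) = (Re(x), Im(x)) ∈ ℝ^{2N} for x ∈ ℂ^N. Then 𝓑^T G(f) = |A* f| and 𝓑 |A* f| = G(f); consequently G(f)/‖f‖ is a singular vector of 𝓑^T with singular value 1 (assuming f ≠ 0). Moreover 𝓑^T G(−i f) = 0, so G(−i f)/‖f‖ is a singular vector of 𝓑^T with singular value 0. -/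
open Matrix Complex BigOperators

/-- Realification map `G(x) = (Re x, Im x)`. -/
def Gr (N : ℕ) (x : Fin N → ℂ) : Fin N ⊕ Fin N → ℝ :=
  Sum.elim (fun i => (x i).re) (fun i => (x i).im)

lemma conj_csgn_mul (z : ℂ) : (starRingEnd ℂ) (csgn z) * z = (‖z‖ : ℂ) := by
  unfold csgn
  by_cases h : z = 0
  · simp [h]
  · rw [if_neg h, map_div₀, Complex.conj_ofReal, div_mul_eq_mul_div, mul_comm,
      Complex.mul_conj, ← Complex.sq_norm]
    push_cast
    have : (‖z‖ : ℂ) ≠ 0 := by simpa using (norm_ne_zero_iff.mpr h)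
    field_simp

lemma csgn_mul_abs (z : ℂ) : csgn z * (‖z‖ : ℂ) = z := by
  unfold csgn
  by_cases h : z = 0
  · simp [h]
  · rw [if_neg h]
    have : (‖z‖ : ℂ) ≠ 0 := by simpa using (norm_ne_zero_iff.mpr h)
    field_simp

/-- `𝓑ᵀ G(f) = |A* f|`, `𝓑 |A* f| = G(f)`, so `G(f)/‖f‖` is a singular vector of `𝓑ᵀ`
with singular value `1`; and `𝓑ᵀ G(−i f) = 0`, so `G(−i f)/‖f‖` is a singular vector
with singular value `0`. -/
theorem leading_singular_vectors (M N : ℕ) (Astar : Matrix (Fin M) (Fin N) ℂ)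
    (hA : Astarᴴ * Astar = 1) (f : Fin N → ℂ) (hf : f ≠ 0)
    (B : Matrix (Fin N) (Fin M) ℂ)
    (hB : B = Astarᴴ * Matrix.diagonal (fun j => csgn (Astar.mulVec f j)))
    (Bcal : Matrix (Fin N ⊕ Fin N) (Fin M) ℝ)
    (hBcal : Bcal = Matrix.of
      (Sum.elim (fun i j => (B i j).re) (fun i j => (B i j).im)))
    (b : Fin M → ℝ) (hb : ∀ j, b j = ‖Astar.mulVec f j‖) :
    Bcalᵀ.mulVec (Gr N f) = b ∧
    Bcal.mulVec b = Gr N f ∧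
    (Bcal * Bcalᵀ).mulVec (Gr N f) = Gr N f ∧
    Bcalᵀ.mulVec (Gr N (fun i => -Complex.I * f i)) = 0 ∧
    (Bcal * Bcalᵀ).mulVec (Gr N (fun i => -Complex.I * f i)) = 0 := by
  set g : Fin M → ℂ := Astar.mulVec f with hg
  have hBij : ∀ i j, B i j = (starRingEnd ℂ) (Astar j i) * csgn (g j) := by
    intro i j
    simp [hB, Matrix.mul_diagonal, Matrix.conjTranspose_apply]
  -- key complex sum for claims 1 and 4
  have hS : ∀ j, (∑ i, (starRingEnd ℂ) (B i j) * f i) = (‖g j‖ : ℂ) := by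
    intro j
    have : (∑ i, (starRingEnd ℂ) (B i j) * f i)
        = (starRingEnd ℂ) (csgn (g j)) * ∑ i, Astar j i * f i := by
      rw [Finset.mul_sum]
      refine Finset.sum_congr rfl fun i _ => ?_
      rw [hBij]
      simp [_root_.map_mul]
      ring
    rw [this]
    have hgj : (∑ i, Astar j i * f i) = g j := rfl
    rw [hgj, conj_csgn_mul]
  -- key complex sum for claim 2
  have hT : ∀ i, (∑ j, B i j * (b j : ℂ)) = f i := by
    intro i
    have : (∑ j, B i j * (b j : ℂ)) = ∑ j, (starRingEnd ℂ) (Astar j i) * g j := by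
      refine Finset.sum_congr rfl fun j _ => ?_
      rw [hBij, hb, mul_assoc, csgn_mul_abs]
    rw [this]
    have : (∑ j, (starRingEnd ℂ) (Astar j i) * g j) = (Astarᴴ *ᵥ g) i := rfl
    rw [this, hg, Matrix.mulVec_mulVec, hA, Matrix.one_mulVec]
  have h1 : Bcalᵀ.mulVec (Gr N f) = b := by
    funext j
    have := congrArg Complex.re (hS j)
    simp only [Complex.re_sum, Complex.mul_re, Complex.conj_re, Complex.conj_im,
      Complex.ofReal_re] at this
    simp [Matrix.mulVec, dotProduct, Fintype.sum_sum_type, hBcal, Gr,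
      Matrix.transpose_apply, hb]
    rw [← this]
    rw [← Finset.sum_add_distrib]
    refine Finset.sum_congr rfl fun i _ => by ring
  have h4 : Bcalᵀ.mulVec (Gr N (fun i => -Complex.I * f i)) = 0 := by
    funext j
    have := congrArg Complex.im (hS j)
    simp only [Complex.im_sum, Complex.mul_im, Complex.conj_re, Complex.conj_im,
      Complex.ofReal_im] at this
    simp [Matrix.mulVec, dotProduct, Fintype.sum_sum_type, hBcal, Gr,
      Matrix.transpose_apply, Complex.mul_re, Complex.mul_im]
    rw [← sub_eq_add_neg, ← Finset.sum_sub_distrib, ← this]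
    refine Finset.sum_congr rfl fun i _ => by ring
  have h2 : Bcal.mulVec b = Gr N f := by
    funext k
    cases k with
    | inl i =>
      have := congrArg Complex.re (hT i)
      simp only [Complex.re_sum, Complex.mul_re, Complex.ofReal_re, Complex.ofReal_im,
        mul_zero, sub_zero] at this
      simpa [Matrix.mulVec, dotProduct, hBcal, Gr] using this
    | inr i =>
      have := congrArg Complex.im (hT i)
      simp only [Complex.im_sum, Complex.mul_im, Complex.ofReal_re, Complex.ofReal_im,
        mul_zero, zero_add, zero_mul, add_zero] at this
      simpa [Matrix.mulVec, dotProduct, hBcal, Gr] using this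
  refine ⟨h1, h2, ?_, h4, ?_⟩
  · rw [← Matrix.mulVec_mulVec, h1, h2]
  · rw [← Matrix.mulVec_mulVec, h4, Matrix.mulVec_zero]
end

section
/- Let A* ∈ ℂ^{M×N} be an isometry and f ∈ ℂ^N with A* f having all entries nonzero. Let B = A diag(sgn(A* f)) and suppose x ∈ ℂ^N satisfies ‖Im(B* x)‖ = ‖x‖. Then for every j, Re(a_j* x) Re(a_j* f) + Im(a_j* x) Im(a_j* f) = 0, where a_j* is the j-th row of A*; equivalently Re( conj(a_j* f) · (a_j* x) ) = 0 for all j. -/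
open Matrix Complex BigOperators

/-- Equality case: if `A*` is an isometry with `A* f` nowhere zero, `B = A diag(sgn(A* f))`,
and `‖Im(B* x)‖ = ‖x‖`, then `Re(conj(a_j* f)(a_j* x)) = 0` for every `j`. -/
theorem equality_case (M N : ℕ) (Astar : Matrix (Fin M) (Fin N) ℂ)
    (hA : Astarᴴ * Astar = 1) (f : Fin N → ℂ)
    (hnz : ∀ j, Astar.mulVec f j ≠ 0)
    (B : Matrix (Fin N) (Fin M) ℂ)
    (hB : B = Astarᴴ * Matrix.diagonal (fun j => csgn (Astar.mulVec f j)))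
    (x : Fin N → ℂ)
    (heq : Real.sqrt (∑ j, ((Bᴴ.mulVec x) j).im ^ 2)
      = Real.sqrt (∑ i, ‖x i‖ ^ 2)) :
    ∀ j, (Astar.mulVec x j).re * (Astar.mulVec f j).re
        + (Astar.mulVec x j).im * (Astar.mulVec f j).im = 0 := by
  set y := Astar.mulVec x with hy
  set w := Astar.mulVec f with hw
  -- entries of Bᴴ x
  have hBH : ∀ j, (Bᴴ.mulVec x) j = (starRingEnd ℂ) (csgn (w j)) * y j := by
    intro j
    rw [hB]
    simp [Matrix.conjTranspose_mul, Matrix.diagonal_conjTranspose, ← Matrix.mulVec_mulVec,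
      Matrix.mulVec_diagonal, hy, hw]
  -- |csgn (w j)| = 1
  have habs : ∀ j, ‖csgn (w j)‖ = 1 := by
    intro j
    rw [csgn, if_neg (hnz j)]
    rw [norm_div, Complex.norm_real, norm_norm]
    exact div_self (by simpa using hnz j)
  -- isometry
  have hiso : ∑ j, ‖y j‖ ^ 2 = ∑ i, ‖x i‖ ^ 2 := by
    have h : star y ⬝ᵥ y = star x ⬝ᵥ x := by
      rw [hy, star_mulVec, Matrix.dotProduct_mulVec, Matrix.vecMul_vecMul, hA, Matrix.vecMul_one]
    have := congrArg Complex.re h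
    simpa [dotProduct, Complex.sq_norm, Complex.normSq_apply, Complex.mul_re] using this
  -- termwise bound
  have hle : ∀ j ∈ Finset.univ, ((Bᴴ.mulVec x) j).im ^ 2 ≤ ‖y j‖ ^ 2 := by
    intro j _
    have h1 : ‖(Bᴴ.mulVec x) j‖ = ‖y j‖ := by
      rw [hBH j, norm_mul, Complex.norm_conj, habs j, one_mul]
    have h2 : ((Bᴴ.mulVec x) j).re ^ 2 + ((Bᴴ.mulVec x) j).im ^ 2
        = ‖y j‖ ^ 2 := by
      rw [← h1, Complex.sq_norm, Complex.normSq_apply]; ring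
    nlinarith [sq_nonneg ((Bᴴ.mulVec x) j).re]
  -- equality of sums
  have hsumeq : ∑ j, ((Bᴴ.mulVec x) j).im ^ 2 = ∑ j, ‖y j‖ ^ 2 := by
    rw [hiso]
    have h1 : 0 ≤ ∑ j, ((Bᴴ.mulVec x) j).im ^ 2 :=
      Finset.sum_nonneg fun j _ => sq_nonneg _
    have h2 : 0 ≤ ∑ i, ‖x i‖ ^ 2 :=
      Finset.sum_nonneg fun i _ => sq_nonneg _
    exact (Real.sqrt_inj h1 h2).mp heq
  -- termwise equality
  have hterm : ∀ j ∈ Finset.univ, ((Bᴴ.mulVec x) j).im ^ 2 = ‖y j‖ ^ 2 :=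
    (Finset.sum_eq_sum_iff_of_le hle).mp hsumeq
  intro j
  have hz : ((starRingEnd ℂ) (csgn (w j)) * y j).re = 0 := by
    have h := hterm j (Finset.mem_univ j)
    rw [hBH j] at h
    have h1 : ‖(starRingEnd ℂ) (csgn (w j)) * y j‖ = ‖y j‖ := by
      rw [norm_mul, Complex.norm_conj, habs j, one_mul]
    have h2 : ((starRingEnd ℂ) (csgn (w j)) * y j).re ^ 2
        + ((starRingEnd ℂ) (csgn (w j)) * y j).im ^ 2 = ‖y j‖ ^ 2 := by
      rw [← h1, Complex.sq_norm, Complex.normSq_apply]; ring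
    nlinarith
  -- unfold csgn
  have hcs : (starRingEnd ℂ) (csgn (w j)) = (starRingEnd ℂ) (w j) / (‖w j‖ : ℂ) := by
    rw [csgn, if_neg (hnz j), map_div₀]
    congr 1
    simp
  rw [hcs] at hz
  have habsne : (‖w j‖ : ℂ) ≠ 0 := by
    simpa using hnz j
  have hz2 : ((starRingEnd ℂ) (w j) * y j).re = 0 := by
    have : (starRingEnd ℂ) (w j) / (‖w j‖ : ℂ) * y j
        = ((starRingEnd ℂ) (w j) * y j) / (‖w j‖ : ℂ) := by ring
    rw [this, Complex.div_ofReal_re] at hz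
    have habsR : ‖w j‖ ≠ 0 := by simpa using hnz j
    exact (div_eq_zero_iff.mp hz).resolve_right habsR
  rw [Complex.mul_re] at hz2
  simp only [Complex.conj_re, Complex.conj_im] at hz2
  linarith
end

section
/- Let m be an even positive integer, μ ∈ ℂ^{m×m} a unimodular mask, and h = conj(Qμ) ⊙ μ. Suppose h = γ R₁ h = γ R₂ h = R₂R₁ h for some γ ∈ {1, −1}. Then for every x ∈ ℂ^{m×m}, the twin y = Qx ⊙ conj(h) satisfies |Φ(x ⊙ μ)| = |Φ(y ⊙ μ)| componentwise, where Φ is the oversampled DFT. -/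
open Complex BigOperators

/-- One-based index on the grid `Fin n ⊕ Fin n` of size `m = 2n`. -/
def idx1 (n : ℕ) : Fin n ⊕ Fin n → ℕ
  | .inl a => a.val + 1
  | .inr a => n + a.val + 1

/-- Index reversal `k ↦ m+1−k` on `Fin n ⊕ Fin n`. -/
def srev (n : ℕ) : Fin n ⊕ Fin n → Fin n ⊕ Fin n
  | .inl a => .inr a.rev
  | .inr a => .inl a.rev

/-- Conjugate inversion `Q`. -/
def Qop (n : ℕ) (x : (Fin n ⊕ Fin n) → (Fin n ⊕ Fin n) → ℂ) :
    (Fin n ⊕ Fin n) → (Fin n ⊕ Fin n) → ℂ :=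
  fun k₁ k₂ => (starRingEnd ℂ) (x (srev n k₁) (srev n k₂))

/-- Reflector swapping the left/right block-columns. -/
def R1 (n : ℕ) (x : (Fin n ⊕ Fin n) → (Fin n ⊕ Fin n) → ℂ) :
    (Fin n ⊕ Fin n) → (Fin n ⊕ Fin n) → ℂ :=
  fun k₁ k₂ => x k₁ (Sum.swap k₂)

/-- Reflector swapping the top/bottom block-rows. -/
def R2 (n : ℕ) (x : (Fin n ⊕ Fin n) → (Fin n ⊕ Fin n) → ℂ) :
    (Fin n ⊕ Fin n) → (Fin n ⊕ Fin n) → ℂ :=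
  fun k₁ k₂ => x (Sum.swap k₁) k₂

/-- The 2D oversampled DFT of an `m×m` array (`m = 2n`), sampled on the
`(2m−1)×(2m−1)` grid. -/
noncomputable def Phi2 (n : ℕ) (z : (Fin n ⊕ Fin n) → (Fin n ⊕ Fin n) → ℂ)
    (w₁ w₂ : Fin (2 * (2 * n) - 1)) : ℂ :=
  ∑ k₁ : Fin n ⊕ Fin n, ∑ k₂ : Fin n ⊕ Fin n, z k₁ k₂ *
    Complex.exp (-2 * (Real.pi : ℂ) * Complex.I *
      (((idx1 n k₁ : ℕ) : ℂ) * ((w₁ : ℕ) : ℂ) + ((idx1 n k₂ : ℕ) : ℂ) * ((w₂ : ℕ) : ℂ)) /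
      ((2 * (2 * n) - 1 : ℕ) : ℂ))

lemma srev_srev (n : ℕ) (k : Fin n ⊕ Fin n) : srev n (srev n k) = k := by
  cases k <;> simp [srev, Fin.rev_rev]

lemma idx1_srev_add (n : ℕ) (k : Fin n ⊕ Fin n) :
    idx1 n (srev n k) + idx1 n k = 2 * n + 1 := by
  cases k with
  | inl a => have := a.is_lt; simp [srev, idx1, Fin.val_rev]; omega
  | inr a => have := a.is_lt; simp [srev, idx1, Fin.val_rev]; omega

lemma idx1_srev_cast (n : ℕ) (k : Fin n ⊕ Fin n) :
    ((idx1 n (srev n k) : ℕ) : ℂ) = ((2 * n + 1 : ℕ) : ℂ) - ((idx1 n k : ℕ) : ℂ) := by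
  have h := idx1_srev_add n k
  have h2 : ((idx1 n (srev n k) + idx1 n k : ℕ) : ℂ) = ((2 * n + 1 : ℕ) : ℂ) := by rw [h]
  push_cast at h2 ⊢
  linear_combination h2

def srevEquiv (n : ℕ) : (Fin n ⊕ Fin n) ≃ (Fin n ⊕ Fin n) :=
  ⟨srev n, srev n, srev_srev n, srev_srev n⟩

lemma phi2_Q_abs (n : ℕ) (z : (Fin n ⊕ Fin n) → (Fin n ⊕ Fin n) → ℂ)
    (w₁ w₂ : Fin (2 * (2 * n) - 1)) :
    ‖Phi2 n (Qop n z) w₁ w₂‖ = ‖Phi2 n z w₁ w₂‖ := by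
  set c : ℂ := Complex.exp (-2 * (Real.pi : ℂ) * Complex.I *
      (((2 * n + 1 : ℕ) : ℂ) * (((w₁ : ℕ) : ℂ) + ((w₂ : ℕ) : ℂ))) /
      ((2 * (2 * n) - 1 : ℕ) : ℂ)) with hc
  have hE : ∀ k₁ k₂ : Fin n ⊕ Fin n,
      Complex.exp (-2 * (Real.pi : ℂ) * Complex.I *
        (((idx1 n k₁ : ℕ) : ℂ) * ((w₁ : ℕ) : ℂ) + ((idx1 n k₂ : ℕ) : ℂ) * ((w₂ : ℕ) : ℂ)) /
        ((2 * (2 * n) - 1 : ℕ) : ℂ))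
      = c * (starRingEnd ℂ) (Complex.exp (-2 * (Real.pi : ℂ) * Complex.I *
        (((idx1 n (srev n k₁) : ℕ) : ℂ) * ((w₁ : ℕ) : ℂ) +
          ((idx1 n (srev n k₂) : ℕ) : ℂ) * ((w₂ : ℕ) : ℂ)) /
        ((2 * (2 * n) - 1 : ℕ) : ℂ))) := by
    intro k₁ k₂
    rw [← Complex.exp_conj, hc, ← Complex.exp_add]
    congr 1
    simp only [map_div₀, map_mul, map_add, map_neg, Complex.conj_I, Complex.conj_ofReal,
      map_natCast, map_ofNat]
    rw [idx1_srev_cast n k₁, idx1_srev_cast n k₂]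
    ring
  have key : Phi2 n (Qop n z) w₁ w₂ = c * (starRingEnd ℂ) (Phi2 n z w₁ w₂) := by
    unfold Phi2 Qop
    rw [map_sum, Finset.mul_sum]
    apply Fintype.sum_equiv (srevEquiv n)
    intro k₁
    rw [map_sum, Finset.mul_sum]
    apply Fintype.sum_equiv (srevEquiv n)
    intro k₂
    simp only [srevEquiv, Equiv.coe_fn_mk]
    rw [map_mul, hE k₁ k₂]
    ring
  have habs : ‖c‖ = 1 := by
    rw [hc, show (-2 * (Real.pi : ℂ) * Complex.I *
        (((2 * n + 1 : ℕ) : ℂ) * (((w₁ : ℕ) : ℂ) + ((w₂ : ℕ) : ℂ))) /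
        ((2 * (2 * n) - 1 : ℕ) : ℂ))
      = (((-2 * Real.pi * ((2 * n + 1 : ℕ) * ((w₁ : ℕ) + (w₂ : ℕ))) /
          ((2 * (2 * n) - 1 : ℕ)) : ℝ)) : ℂ) * Complex.I from by push_cast; ring]
    exact Complex.norm_exp_ofReal_mul_I _
  rw [key, norm_mul, Complex.norm_conj, habs, one_mul]

/-- Twin image: if the unimodular mask `μ` has `h = conj(Qμ) ⊙ μ` satisfying the block
symmetry `h = γ R₁ h = γ R₂ h = R₂ R₁ h` with `γ = ±1`, then for any object `x` the
twin `y = Qx ⊙ conj(h)` produces the same oversampled Fourier magnitudes through `μ`. -/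
theorem twin_image (n : ℕ) (hn : 0 < n)
    (μ : (Fin n ⊕ Fin n) → (Fin n ⊕ Fin n) → ℂ)
    (hμ : ∀ k₁ k₂, ‖μ k₁ k₂‖ = 1)
    (h : (Fin n ⊕ Fin n) → (Fin n ⊕ Fin n) → ℂ)
    (hh : ∀ k₁ k₂, h k₁ k₂ = (starRingEnd ℂ) (Qop n μ k₁ k₂) * μ k₁ k₂)
    (γ : ℂ) (hγ : γ = 1 ∨ γ = -1)
    (hsym1 : ∀ k₁ k₂, h k₁ k₂ = γ * R1 n h k₁ k₂)
    (hsym2 : ∀ k₁ k₂, h k₁ k₂ = γ * R2 n h k₁ k₂)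
    (hsym3 : ∀ k₁ k₂, h k₁ k₂ = R2 n (R1 n h) k₁ k₂)
    (x y : (Fin n ⊕ Fin n) → (Fin n ⊕ Fin n) → ℂ)
    (hy : ∀ k₁ k₂, y k₁ k₂ = Qop n x k₁ k₂ * (starRingEnd ℂ) (h k₁ k₂)) :
    ∀ w₁ w₂ : Fin (2 * (2 * n) - 1),
      ‖Phi2 n (fun k₁ k₂ => x k₁ k₂ * μ k₁ k₂) w₁ w₂‖
        = ‖Phi2 n (fun k₁ k₂ => y k₁ k₂ * μ k₁ k₂) w₁ w₂‖ := by
  intro w₁ w₂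
  have hzfun : (fun k₁ k₂ => y k₁ k₂ * μ k₁ k₂)
      = Qop n (fun k₁ k₂ => x k₁ k₂ * μ k₁ k₂) := by
    funext k₁ k₂
    have hm : (starRingEnd ℂ) (μ k₁ k₂) * μ k₁ k₂ = 1 := by
      have hns : Complex.normSq (μ k₁ k₂) = 1 := by
        rw [Complex.normSq_eq_norm_sq, hμ]; norm_num
      rw [mul_comm, Complex.mul_conj, hns, Complex.ofReal_one]
    rw [hy, hh]
    simp only [Qop, map_mul, Complex.conj_conj]
    calc (starRingEnd ℂ) (x (srev n k₁) (srev n k₂)) *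
          ((starRingEnd ℂ) (μ (srev n k₁) (srev n k₂)) * (starRingEnd ℂ) (μ k₁ k₂)) * μ k₁ k₂
        = (starRingEnd ℂ) (x (srev n k₁) (srev n k₂)) *
            (starRingEnd ℂ) (μ (srev n k₁) (srev n k₂)) *
            ((starRingEnd ℂ) (μ k₁ k₂) * μ k₁ k₂) := by ring
      _ = (starRingEnd ℂ) (x (srev n k₁) (srev n k₂)) *
            (starRingEnd ℂ) (μ (srev n k₁) (srev n k₂)) := by rw [hm, mul_one]
  rw [hzfun]
  exact (phi2_Q_abs n _ w₁ w₂).symm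
end
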